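/- (Sign preservation, Lemma 1.) For every i ∈ {1,…,n}, every coordinate k, and all iteration indices j ≤ j': if δ^i_k(j) > 0 then δ^i_k(j') ≥ 0; if δ^i_k(j) < 0 then δ^i_k(j') ≤ 0; and if δ^i_k(j) = 0 then δ^i_k(j') = 0 for all j' > j. -/
import Mathlib


open Filter

theorem stmt1
    (n d : ℕ) (hn : 1 ≤ n) (hd : 1 ≤ d)
    (Δ : ℕ → Fin n → Fin d → ℝ)
    (γ ε U : ℕ → Fin d → ℝ)
    (M : ℕ → Fin n → Fin d → ℝ)
    (lam : ℕ → Fin n → ℝ)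
    (hγ : ∀ (j : ℕ) k, γ (j+1) k = Real.sign (∑ i, Δ j i k))
    (hε : ∀ (j : ℕ) k, γ (j+1) k ≠ 0 →
      (∃ i, Real.sign (Δ j i k) = γ (j+1) k ∧ |Δ j i k| = ε (j+1) k) ∧
      (∀ i, Real.sign (Δ j i k) = γ (j+1) k → |Δ j i k| ≤ ε (j+1) k))
    (hε0 : ∀ (j : ℕ) k, γ (j+1) k = 0 → ε (j+1) k = 0)
    (hU : ∀ (j : ℕ) k, U (j+1) k = γ (j+1) k * ε (j+1) k)
    (hM : ∀ (j : ℕ) i k, M (j+1) i k = if 0 < Δ j i k * U (j+1) k then 1 else 0)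
    (hden : ∀ (j : ℕ) i, ∑ k, |M (j+1) i k * U (j+1) k| ≠ 0)
    (hlam : ∀ (j : ℕ) i,
      lam (j+1) i = (∑ k, |Δ j i k|) / (∑ k, |M (j+1) i k * U (j+1) k|))
    (hstep : ∀ (j : ℕ) i k, Δ (j+1) i k = lam (j+1) i * (M (j+1) i k * U (j+1) k)) :
    (∀ (i : Fin n) (k : Fin d) (j j' : ℕ), j ≤ j' →
      (0 < Δ j i k → 0 ≤ Δ j' i k) ∧ (Δ j i k < 0 → Δ j' i k ≤ 0)) ∧
    (∀ (i : Fin n) (k : Fin d) (j j' : ℕ), j < j' → Δ j i k = 0 → Δ j' i k = 0) := by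
  have hlam_nonneg : ∀ (j : ℕ) i, 0 ≤ lam (j+1) i := by
    intro j i
    rw [hlam]
    exact div_nonneg (Finset.sum_nonneg fun k _ => abs_nonneg _)
      (Finset.sum_nonneg fun k _ => abs_nonneg _)
  have step : ∀ (j : ℕ) (i : Fin n) (k : Fin d),
      (0 < Δ j i k → 0 ≤ Δ (j+1) i k) ∧ (Δ j i k < 0 → Δ (j+1) i k ≤ 0) ∧
      (Δ j i k = 0 → Δ (j+1) i k = 0) := by
    intro j i k
    have h := hstep j i k
    have hm := hM j i k
    by_cases hpos : 0 < Δ j i k * U (j+1) k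
    · rw [if_pos hpos] at hm
      rw [hm, one_mul] at h
      refine ⟨?_, ?_, ?_⟩
      · intro hΔ
        have hU' : 0 < U (j+1) k := by nlinarith
        rw [h]; exact mul_nonneg (hlam_nonneg j i) hU'.le
      · intro hΔ
        have hU' : U (j+1) k < 0 := by nlinarith
        rw [h]; exact mul_nonpos_of_nonneg_of_nonpos (hlam_nonneg j i) hU'.le
      · intro hΔ
        exfalso; rw [hΔ, zero_mul] at hpos; exact lt_irrefl 0 hpos
    · rw [if_neg hpos] at hm
      rw [hm, zero_mul, mul_zero] at h
      exact ⟨fun _ => h.ge, fun _ => h.le, fun _ => h⟩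
  have zero_pres : ∀ (i : Fin n) (k : Fin d) (j j' : ℕ), j ≤ j' → Δ j i k = 0 → Δ j' i k = 0 := by
    intro i k j j' hle h0
    induction j' , hle using Nat.le_induction with
    | base => exact h0
    | succ m hm ih => exact (step m i k).2.2 ih
  constructor
  · intro i k j j' hle
    induction j' , hle using Nat.le_induction with
    | base => exact ⟨fun h => h.le, fun h => h.le⟩
    | succ m hm ih =>
      constructor
      · intro hΔ
        rcases lt_trichotomy (Δ m i k) 0 with h | h | h
        · exact absurd (ih.1 hΔ) (not_le.mpr h)
        · exact ((step m i k).2.2 h).ge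
        · exact (step m i k).1 h
      · intro hΔ
        rcases lt_trichotomy (Δ m i k) 0 with h | h | h
        · exact (step m i k).2.1 h
        · exact ((step m i k).2.2 h).le
        · exact absurd (ih.2 hΔ) (not_le.mpr h)
  · intro i k j j' hlt h0
    exact zero_pres i k j j' hlt.le h0
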